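/- Let k ≥ 4 be a power of 2, and for k/2 < j ≤ k let |F_j| = 2^{-(log₂ k)·2^{2^j}}·2^{-j}/k and r_j = 2^{(log₂ k)·2^{2^j}}. Then Σ_{j=k/2+1}^{k} r_j·|F_j|·log₂log₂(4/|F_j|) ≍ 1 and Σ_{j=k/2+1}^{k} r_j·|F_j|·log₂log₂(4/|F_j|)·log₂log₂log₂log₂(4/|F_j|) ≍ log₂ k, with implied constants absolute (independent of k). -/

import Mathlib

private lemma logb_two_natcast_pow (m : ℕ) : Real.logb 2 (((2^m : ℕ) : ℝ)) = m := by
  push_cast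
  rw [← Real.rpow_natCast 2 m, Real.logb_rpow (by norm_num) (by norm_num)]

/-- Norm computations for the counterexample functions: with
`|F_j| = 2^{-(log₂ k)2^{2^j}} 2^{-j}/k` and `r_j = 2^{(log₂ k)2^{2^j}}` for `k/2 < j ≤ k`,
the `L log log L` norm sum is `≍ 1` while the `L log log L log log log log L` sum is
`≍ log₂ k`, with absolute constants. -/
theorem stmt12 :
    ∃ c C : ℝ, 0 < c ∧ 0 < C ∧ ∀ K k : ℕ, k = 2 ^ K → 4 ≤ k →
      ∀ F r : ℕ → ℝ,
        (∀ j, F j = (2:ℝ) ^ (-(Real.logb 2 k * (2:ℝ) ^ (2 ^ j : ℕ))) *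
          (2:ℝ) ^ (-(j:ℝ)) / k) →
        (∀ j, r j = (2:ℝ) ^ (Real.logb 2 k * (2:ℝ) ^ (2 ^ j : ℕ))) →
        (c ≤ ∑ j ∈ Finset.Ioc (k/2) k, r j * F j * Real.logb 2 (Real.logb 2 (4 / F j)) ∧
          ∑ j ∈ Finset.Ioc (k/2) k, r j * F j * Real.logb 2 (Real.logb 2 (4 / F j)) ≤ C) ∧
        (c * Real.logb 2 k ≤
            ∑ j ∈ Finset.Ioc (k/2) k, r j * F j * Real.logb 2 (Real.logb 2 (4 / F j)) *
              Real.logb 2 (Real.logb 2 (Real.logb 2 (Real.logb 2 (4 / F j)))) ∧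
          ∑ j ∈ Finset.Ioc (k/2) k, r j * F j * Real.logb 2 (Real.logb 2 (4 / F j)) *
              Real.logb 2 (Real.logb 2 (Real.logb 2 (Real.logb 2 (4 / F j)))) ≤
            C * Real.logb 2 k) := by
  refine ⟨1/4, 3, by norm_num, by norm_num, ?_⟩
  intro K k hkK hk4 F r hF hr
  have hK2 : 2 ≤ K := by
    by_contra h
    interval_cases K <;> omega
  have hk0 : 0 < k := by omega
  have hk0' : (0:ℝ) < k := by exact_mod_cast hk0
  have hkR : (k:ℝ) = (2:ℝ) ^ (K:ℝ) := by
    rw [hkK]; push_cast; rw [Real.rpow_natCast]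
  have hlogk : Real.logb 2 (k:ℝ) = K := by
    rw [hkR, Real.logb_rpow (by norm_num) (by norm_num)]
  have hKk : K ≤ k := by
    rw [hkK]; exact (Nat.lt_two_pow_self (n := K)).le
  have hk2pow : k = 2 * 2^(K-1) := by
    conv_lhs => rw [hkK, show K = (K-1)+1 by omega]
    rw [pow_succ]; ring
  have khalf : 2 * (k/2) = k := by omega
  have khalf2 : 2^(K-1) = k/2 := by omega
  have hKhalf : K ≤ k/2 := by
    rw [← khalf2]
    have := Nat.lt_two_pow_self (n := K-1)
    omega
  have hK0R : (0:ℝ) < (K:ℝ) := by exact_mod_cast (by omega : 0 < K)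
  -- per-term bounds
  have key : ∀ j ∈ Finset.Ioc (k/2) k,
      (1/(k:ℝ) ≤ r j * F j * Real.logb 2 (Real.logb 2 (4 / F j)) ∧
        r j * F j * Real.logb 2 (Real.logb 2 (4 / F j)) ≤ 2/(k:ℝ)) ∧
      ((1/(k:ℝ)) * ((K:ℝ)/2) ≤ r j * F j * Real.logb 2 (Real.logb 2 (4 / F j)) *
          Real.logb 2 (Real.logb 2 (Real.logb 2 (Real.logb 2 (4 / F j)))) ∧
        r j * F j * Real.logb 2 (Real.logb 2 (4 / F j)) *
          Real.logb 2 (Real.logb 2 (Real.logb 2 (Real.logb 2 (4 / F j)))) ≤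
          (2/(k:ℝ)) * (3*(K:ℝ)/2)) := by
    intro j hj
    rw [Finset.mem_Ioc] at hj
    obtain ⟨hj1, hj2⟩ := hj
    have hj3 : 3 ≤ j := by omega
    have hKj : K < j := by omega
    set e : ℝ := (K:ℝ) * (2:ℝ) ^ (2^j : ℕ) with he
    set n : ℕ := K * 2^(2^j) + j + K + 2 with hn
    have hne : (n:ℝ) = e + (j:ℝ) + (K:ℝ) + 2 := by
      rw [hn, he]; push_cast; ring
    -- r j * F j
    have hrF : r j * F j = (2:ℝ) ^ (-(j:ℝ)) / k := by
      rw [hr j, hF j, hlogk, ← mul_div_assoc, ← mul_assoc,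
        ← Real.rpow_add (by norm_num : (0:ℝ) < 2), add_neg_cancel, Real.rpow_zero, one_mul]
    -- 4 / F j = 2 ^ (n : ℝ)
    have hFj : F j = (2:ℝ) ^ (-(e + (j:ℝ))) / k := by
      rw [hF j, hlogk, neg_add, Real.rpow_add (by norm_num : (0:ℝ) < 2)]
    have h4F : (4:ℝ) / F j = (2:ℝ) ^ ((n:ℕ) : ℝ) := by
      have hx : (0:ℝ) < (2:ℝ) ^ (e + (j:ℝ)) := Real.rpow_pos_of_pos (by norm_num) _
      have h2 : (2:ℝ) ^ (2:ℝ) = 4 := by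
        have h := Real.rpow_natCast (2:ℝ) 2
        rw [Nat.cast_ofNat] at h
        rw [h]; norm_num
      have hsplit : (2:ℝ) ^ ((n:ℕ):ℝ) = (2:ℝ) ^ (e + (j:ℝ)) * ((k:ℝ) * 4) := by
        rw [hne, show e + (j:ℝ) + (K:ℝ) + 2 = (e + (j:ℝ)) + (K:ℝ) + 2 by ring,
          Real.rpow_add (by norm_num : (0:ℝ) < 2),
          Real.rpow_add (by norm_num : (0:ℝ) < 2), ← hkR, h2]
        ring
      rw [hFj, hsplit, Real.rpow_neg (by norm_num : (0:ℝ) ≤ 2)]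
      field_simp
    have hlog4F : Real.logb 2 (4 / F j) = ((n:ℕ):ℝ) := by
      rw [h4F, Real.logb_rpow (by norm_num) (by norm_num)]
    -- nat bounds on n
    have hone : 1 ≤ 2^(2^j) := Nat.one_le_two_pow
    have hn1 : 2^(2^j) ≤ n := by
      have : 2^(2^j) ≤ K * 2^(2^j) := Nat.le_mul_of_pos_left _ (by omega)
      omega
    have e1 : K + 2 ≤ 2^j := by
      have := Nat.lt_two_pow_self (n := j)
      omega
    have e2 : 2*K + j + 2 ≤ 2^(2^j) := by
      calc 2*K + j + 2 ≤ 4 * k := by omega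
        _ = 2^(K+2) := by rw [hkK, pow_add]; ring
        _ ≤ 2^(2^j) := Nat.pow_le_pow_right (by norm_num) e1
    have hn2 : n ≤ 2^(2^(j+1)) := by
      calc n ≤ (2*K + j + 2) * 2^(2^j) := by rw [hn]; nlinarith [hone]
        _ ≤ 2^(2^j) * 2^(2^j) := Nat.mul_le_mul_right _ e2
        _ = 2^(2^(j+1)) := by rw [← pow_add]; congr 1; rw [pow_succ]; ring
    rw [hrF, hlog4F]
    have hn_pos : (0:ℝ) < ((n:ℕ):ℝ) := by exact_mod_cast (by omega : 0 < n)
    -- level 2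
    have hB_lo : ((2^j : ℕ):ℝ) ≤ Real.logb 2 ((n:ℕ):ℝ) := by
      calc ((2^j : ℕ):ℝ) = Real.logb 2 ((2^(2^j):ℕ):ℝ) := (logb_two_natcast_pow _).symm
        _ ≤ Real.logb 2 ((n:ℕ):ℝ) := by
            apply Real.logb_le_logb_of_le (by norm_num) (by positivity)
            exact_mod_cast hn1
    have hB_hi : Real.logb 2 ((n:ℕ):ℝ) ≤ ((2^(j+1) : ℕ):ℝ) := by
      calc Real.logb 2 ((n:ℕ):ℝ) ≤ Real.logb 2 ((2^(2^(j+1)):ℕ):ℝ) := by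
            apply Real.logb_le_logb_of_le (by norm_num) hn_pos
            exact_mod_cast hn2
        _ = ((2^(j+1) : ℕ):ℝ) := logb_two_natcast_pow _
    set B : ℝ := Real.logb 2 ((n:ℕ):ℝ) with hB
    have hB_pos : (0:ℝ) < B := lt_of_lt_of_le (by positivity) hB_lo
    -- level 3
    have hD_lo : (j:ℝ) ≤ Real.logb 2 B := by
      calc (j:ℝ) = Real.logb 2 ((2^j : ℕ):ℝ) := (logb_two_natcast_pow _).symm
        _ ≤ Real.logb 2 B := Real.logb_le_logb_of_le (by norm_num) (by positivity) hB_lo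
    have hD_hi : Real.logb 2 B ≤ (j:ℝ) + 1 := by
      calc Real.logb 2 B ≤ Real.logb 2 ((2^(j+1) : ℕ):ℝ) :=
            Real.logb_le_logb_of_le (by norm_num) hB_pos hB_hi
        _ = ((j:ℝ) + 1) := by rw [logb_two_natcast_pow]; push_cast; ring
    set D : ℝ := Real.logb 2 B with hD
    have hj_posR : (0:ℝ) < (j:ℝ) := by exact_mod_cast (by omega : 0 < j)
    have hD_pos : (0:ℝ) < D := lt_of_lt_of_le hj_posR hD_lo
    -- level 4
    have hE_lo : (K:ℝ)/2 ≤ Real.logb 2 D := by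
      have h1 : ((2^(K-1) : ℕ):ℝ) ≤ (j:ℝ) := by
        have : 2^(K-1) ≤ j := by omega
        exact_mod_cast this
      calc (K:ℝ)/2 ≤ (K:ℝ) - 1 := by
            have : (2:ℝ) ≤ (K:ℝ) := by exact_mod_cast hK2
            linarith
        _ = Real.logb 2 ((2^(K-1) : ℕ):ℝ) := by
            rw [logb_two_natcast_pow]
            have h1K : (1:ℕ) ≤ K := by omega
            push_cast [h1K]
            ring
        _ ≤ Real.logb 2 (j:ℝ) :=
            Real.logb_le_logb_of_le (by norm_num) (by positivity) h1
        _ ≤ Real.logb 2 D :=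
            Real.logb_le_logb_of_le (by norm_num) hj_posR hD_lo
    have hE_hi : Real.logb 2 D ≤ 3*(K:ℝ)/2 := by
      have h1 : (j:ℝ) + 1 ≤ ((2^(K+1) : ℕ):ℝ) := by
        have h2 : j + 1 ≤ 2^(K+1) := by
          have : 2^(K+1) = 2*k := by rw [hkK, pow_succ]; ring
          omega
        exact_mod_cast h2
      calc Real.logb 2 D ≤ Real.logb 2 ((2^(K+1) : ℕ):ℝ) :=
            Real.logb_le_logb_of_le (by norm_num) hD_pos (le_trans hD_hi h1)
        _ = (K:ℝ) + 1 := by rw [logb_two_natcast_pow]; push_cast; ring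
        _ ≤ 3*(K:ℝ)/2 := by
            have : (2:ℝ) ≤ (K:ℝ) := by exact_mod_cast hK2
            linarith
    set E : ℝ := Real.logb 2 D with hE
    have hE_pos : (0:ℝ) < E := lt_of_lt_of_le (by linarith) hE_lo
    -- cancellation
    have cancel : ∀ m : ℕ, (2:ℝ)^(-(j:ℝ)) * ((2^m:ℕ):ℝ) = (2:ℝ)^(((m:ℕ):ℝ)-(j:ℝ)) := by
      intro m
      rw [show (((2^m:ℕ)):ℝ) = (2:ℝ)^((m:ℕ):ℝ) from by push_cast; rw [Real.rpow_natCast],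
        ← Real.rpow_add (by norm_num)]
      ring_nf
    have cancel1 : (2:ℝ)^(-(j:ℝ)) * ((2^j:ℕ):ℝ) = 1 := by
      rw [cancel j, sub_self, Real.rpow_zero]
    have cancel2 : (2:ℝ)^(-(j:ℝ)) * ((2^(j+1):ℕ):ℝ) = 2 := by
      rw [cancel (j+1), show (((j+1:ℕ)):ℝ) - (j:ℝ) = 1 from by push_cast; ring, Real.rpow_one]
    have hfac_pos : (0:ℝ) < (2:ℝ)^(-(j:ℝ))/(k:ℝ) := by positivity
    -- term 1 bounds
    have ht1lo : 1/(k:ℝ) ≤ (2:ℝ)^(-(j:ℝ))/(k:ℝ) * B := by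
      calc 1/(k:ℝ) = (2:ℝ)^(-(j:ℝ))/(k:ℝ) * ((2^j:ℕ):ℝ) := by
            rw [div_mul_eq_mul_div, cancel1]
        _ ≤ (2:ℝ)^(-(j:ℝ))/(k:ℝ) * B := mul_le_mul_of_nonneg_left hB_lo hfac_pos.le
    have ht1hi : (2:ℝ)^(-(j:ℝ))/(k:ℝ) * B ≤ 2/(k:ℝ) := by
      calc (2:ℝ)^(-(j:ℝ))/(k:ℝ) * B ≤ (2:ℝ)^(-(j:ℝ))/(k:ℝ) * ((2^(j+1):ℕ):ℝ) :=
            mul_le_mul_of_nonneg_left hB_hi hfac_pos.le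
        _ = 2/(k:ℝ) := by rw [div_mul_eq_mul_div, cancel2]
    refine ⟨⟨ht1lo, ht1hi⟩, ?_, ?_⟩
    · exact mul_le_mul ht1lo hE_lo (by positivity) (le_trans (by positivity) ht1lo)
    · exact mul_le_mul ht1hi hE_hi hE_pos.le (by positivity)
  -- sums
  have hcard : (Finset.Ioc (k/2) k).card = k/2 := by
    rw [Nat.card_Ioc]; omega
  have hhalf_pos : 0 < k/2 := by omega
  have hk2m : (k:ℝ) = 2*((k/2:ℕ):ℝ) := by exact_mod_cast khalf.symm
  have hm_pos : (0:ℝ) < ((k/2:ℕ):ℝ) := by exact_mod_cast hhalf_pos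
  have s1lo := Finset.card_nsmul_le_sum (Finset.Ioc (k/2) k) _ (1/(k:ℝ))
    (fun j hj => ((key j hj).1).1)
  have s1hi := Finset.sum_le_card_nsmul (Finset.Ioc (k/2) k) _ (2/(k:ℝ))
    (fun j hj => ((key j hj).1).2)
  have s2lo := Finset.card_nsmul_le_sum (Finset.Ioc (k/2) k) _ ((1/(k:ℝ)) * ((K:ℝ)/2))
    (fun j hj => ((key j hj).2).1)
  have s2hi := Finset.sum_le_card_nsmul (Finset.Ioc (k/2) k) _ ((2/(k:ℝ)) * (3*(K:ℝ)/2))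
    (fun j hj => ((key j hj).2).2)
  rw [hcard, nsmul_eq_mul] at s1lo s1hi s2lo s2hi
  have hv1 : ((k/2:ℕ):ℝ) * (1/(k:ℝ)) = 1/2 := by
    rw [hk2m]; field_simp
  have hv2 : ((k/2:ℕ):ℝ) * (2/(k:ℝ)) = 1 := by
    rw [hk2m]; field_simp
  have hv3 : ((k/2:ℕ):ℝ) * ((1/(k:ℝ)) * ((K:ℝ)/2)) = (K:ℝ)/4 := by
    rw [hk2m]; field_simp; ring
  have hv4 : ((k/2:ℕ):ℝ) * ((2/(k:ℝ)) * (3*(K:ℝ)/2)) = 3*(K:ℝ)/2 := by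
    rw [hk2m]; field_simp
  rw [hv1] at s1lo
  rw [hv2] at s1hi
  rw [hv3] at s2lo
  rw [hv4] at s2hi
  rw [hlogk]
  exact ⟨⟨by linarith, by linarith⟩, by linarith, by linarith⟩
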